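/- Let λ > 0 and a > 0, and define the threshold t* by t* = λa/2 if λ ≤ 1/a², and t* = √λ − 1/(2a) if λ > 1/a². Then for every v ∈ ℝ with |v| ≤ t*, the point 0 is a global minimizer over ℝ of the function x ↦ (x − v)² + λ ρ_a(x). -/

import Mathlib

open Matrix Filter Topology

noncomputable def rho (a t : ℝ) : ℝ := a * |t| / (a * |t| + 1)

noncomputable def Pa {n : ℕ} (a : ℝ) (x : Fin n → ℝ) : ℝ := ∑ i, rho a (x i)

open scoped Classical in
noncomputable def l0 {n : ℕ} (x : Fin n → ℝ) : ℕ :=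
  (Finset.univ.filter fun i => x i ≠ 0).card

def SOL {m n : ℕ} (A : Matrix (Fin m) (Fin n) ℝ) (b : Fin m → ℝ) : Set (Fin n → ℝ) :=
  {x | A.mulVec x = b ∧ 0 ≤ x}

noncomputable def sqN {n : ℕ} (v : Fin n → ℝ) : ℝ := ∑ i, (v i) ^ 2

def projPos {n : ℕ} (v : Fin n → ℝ) : Fin n → ℝ := fun i => max 0 (v i)

noncomputable def C1 {m n : ℕ} (A : Matrix (Fin m) (Fin n) ℝ) (b : Fin m → ℝ)
    (lam a : ℝ) (x : Fin n → ℝ) : ℝ :=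
  sqN (A.mulVec x - b) + lam * Pa a x

noncomputable def C2 {m n : ℕ} (A : Matrix (Fin m) (Fin n) ℝ) (b : Fin m → ℝ)
    (lam a mu : ℝ) (x z : Fin n → ℝ) : ℝ :=
  mu * (C1 A b lam a x - sqN (A.mulVec x - A.mulVec z)) + sqN (x - z)

noncomputable def Bmu {m n : ℕ} (A : Matrix (Fin m) (Fin n) ℝ) (b : Fin m → ℝ)
    (mu : ℝ) (z : Fin n → ℝ) : Fin n → ℝ :=
  z + mu • (Aᵀ.mulVec (b - A.mulVec z))

theorem stmt10 (lam a : ℝ) (hl : 0 < lam) (ha : 0 < a)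
    (tstar : ℝ)
    (htstar : tstar = if lam ≤ 1 / a ^ 2 then lam * a / 2 else Real.sqrt lam - 1 / (2 * a))
    (v : ℝ) (hv : |v| ≤ tstar) :
    ∀ x : ℝ, ((0 : ℝ) - v) ^ 2 + lam * rho a 0 ≤ (x - v) ^ 2 + lam * rho a x := by
  intro x
  have h0 : rho a 0 = 0 := by simp [rho]
  set t := |x| with ht
  have htpos : 0 ≤ t := abs_nonneg x
  have hden : (0:ℝ) < a * t + 1 := by positivity
  set r := a * t / (a * t + 1) with hr
  have hrho : rho a x = r := rfl
  have hrmul : r * (a * t + 1) = a * t := div_mul_cancel₀ _ (ne_of_gt hden)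
  have hrnonneg : 0 ≤ r := by positivity
  have key : 2 * |v| * t ≤ t ^ 2 + lam * r := by
    rw [← mul_le_mul_iff_of_pos_right hden]
    have expand : (t ^ 2 + lam * r) * (a * t + 1) = t ^ 2 * (a * t + 1) + lam * (a * t) := by
      rw [add_mul, mul_assoc, hrmul]
    rw [expand]
    by_cases hc : lam ≤ 1 / a ^ 2
    · have hv2 : 2 * |v| ≤ lam * a := by
        rw [htstar, if_pos hc] at hv; linarith
      have hla : lam * a ^ 2 ≤ 1 := by
        rw [le_div_iff₀ (by positivity)] at hc; linarith
      have h1 : 2 * |v| * (t * (a * t + 1)) ≤ lam * a * (t * (a * t + 1)) :=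
        mul_le_mul_of_nonneg_right hv2 (mul_nonneg htpos hden.le)
      nlinarith [h1, mul_nonneg (sub_nonneg.mpr hla) (sq_nonneg t),
        mul_nonneg ha.le (mul_nonneg (mul_nonneg htpos htpos) htpos)]
    · set s := Real.sqrt lam with hs
      have hs2 : s ^ 2 = lam := Real.sq_sqrt hl.le
      have hspos : 0 < s := Real.sqrt_pos.mpr hl
      have hv2 : 2 * |v| ≤ 2 * s - 1 / a := by
        rw [htstar, if_neg hc] at hv
        have h1a : 1 / (2 * a) = (1 / a) / 2 := by ring
        linarith [abs_nonneg v, hv]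
      have h1 : 2 * |v| * (t * (a * t + 1)) ≤ (2 * s - 1 / a) * (t * (a * t + 1)) :=
        mul_le_mul_of_nonneg_right hv2 (mul_nonneg htpos hden.le)
      have h2 : (2 * s - 1 / a) * (t * (a * t + 1)) ≤ t ^ 2 * (a * t + 1) + s ^ 2 * (a * t) := by
        rw [← mul_le_mul_iff_of_pos_left ha]
        have ha' : a ≠ 0 := ne_of_gt ha
        field_simp
        nlinarith [mul_nonneg htpos (sq_nonneg (a * t + 1 - a * s))]
      nlinarith [h1, h2, hs2]
  have hvx : v * x ≤ |v| * t := by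
    calc v * x ≤ |v * x| := le_abs_self _
    _ = |v| * t := abs_mul v x
  have hx2 : x ^ 2 = t ^ 2 := (sq_abs x).symm
  rw [h0, hrho]
  nlinarith [key, hvx, hx2]
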